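/- For every integer k ≥ 1, the commutator subgroup [H_k, H_k] of H_k is contained in the centre of G_k and has exponent dividing 2 (every element of [H_k, H_k] squares to the identity). -/

import Mathlib

open Subgroup

namespace P2G

/-- The commutator `[a,b] = a⁻¹ b⁻¹ a b` (left-normed convention of the paper). -/
def comm {M : Type*} [Group M] (a b : M) : M := a⁻¹ * b⁻¹ * a * b

def X : FreeGroup (Fin 2) := FreeGroup.of 0
def Y : FreeGroup (Fin 2) := FreeGroup.of 1

/-- `y_j = x^(-j) y x^j` in the free group. -/
def yF (j : ℤ) : FreeGroup (Fin 2) := X ^ (-j) * Y * X ^ j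

/-- Relations for `G_k`:
`x^(2^(k+1)) = y^4 = [x^(2^k), y] = [y^2, x] = 1` and
`[y_0,y_i]^2 = [y_0,y_i,x] = [y_0,y_i,y] = 1` for `1 ≤ i ≤ 2^(k-1)`. -/
def rels (k : ℕ) : Set (FreeGroup (Fin 2)) :=
  {X ^ 2 ^ (k + 1), Y ^ 4, comm (X ^ 2 ^ k) Y, comm (Y ^ 2) X} ∪
    ⋃ i ∈ Set.Icc 1 (2 ^ (k - 1)),
      {comm (yF 0) (yF i) ^ 2, comm (comm (yF 0) (yF i)) X, comm (comm (yF 0) (yF i)) Y}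

/-- The group `G_k`, given by the above presentation. -/
abbrev G (k : ℕ) := PresentedGroup (rels k)

/-- The generator `x` of `G_k`. -/
def x (k : ℕ) : G k := PresentedGroup.of 0

/-- The generator `y` of `G_k`. -/
def y (k : ℕ) : G k := PresentedGroup.of 1

/-- `y_j = x^(-j) y x^j` in `G_k`. -/
def yg (k : ℕ) (j : ℤ) : G k := x k ^ (-j) * y k * x k ^ j

/-- `H_k`, the normal closure of `y` in `G_k`. -/
def Hsub (k : ℕ) : Subgroup (G k) := Subgroup.normalClosure {y k}

/-- `Z_k`, the normal closure in `G_k` of `{x^(2^k), y^2} ∪ {[y_0,y_i] : 1 ≤ i ≤ 2^(k-1)}`. -/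
def Zsub (k : ℕ) : Subgroup (G k) :=
  Subgroup.normalClosure ({x k ^ 2 ^ k, y k ^ 2} ∪
    {g | ∃ i : ℕ, 1 ≤ i ∧ i ≤ 2 ^ (k - 1) ∧ g = comm (yg k 0) (yg k i)})

/-- `G_k^(2^j)`, the subgroup generated by all `2^j`-th powers of elements of `G_k`. -/
def pow2 (k j : ℕ) : Subgroup (G k) := Subgroup.closure (Set.range fun g : G k => g ^ 2 ^ j)

/-- `w = y_(2^k − 1) y_(2^k − 2) ⋯ y_1 y_0` in `G_k`. -/
def w (k : ℕ) : G k := (((List.range (2 ^ k)).reverse).map fun j => yg k j).prod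

/-- The left-normed commutator `c k i = [y, x, …(i copies of x)…, x]`; `c k 0 = y`. -/
def c (k : ℕ) : ℕ → G k
  | 0 => y k
  | i + 1 => comm (c k i) (x k)

/-- `γ_m(G_k)`, the `m`-th term of the lower central series (`γ_1 = G_k`). -/
abbrev gamma (k m : ℕ) : Subgroup (G k) := Subgroup.lowerCentralSeries (⊤ : Subgroup (G k)) (m - 1)

def pr (k : ℕ) : FreeGroup (Fin 2) →* G k := PresentedGroup.mk (rels k)

lemma pr_rel {k : ℕ} {r : FreeGroup (Fin 2)} (hr : r ∈ rels k) : pr k r = 1 :=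
  (QuotientGroup.eq_one_iff _).mpr (Subgroup.subset_normalClosure hr)

lemma pr_X {k : ℕ} : pr k X = x k := rfl
lemma pr_Y {k : ℕ} : pr k Y = y k := rfl
lemma pr_comm {k : ℕ} (a b : FreeGroup (Fin 2)) : pr k (comm a b) = comm (pr k a) (pr k b) := by
  simp [comm]
lemma pr_yF {k : ℕ} (j : ℤ) : pr k (yF j) = yg k j := by
  simp [yF, yg, map_zpow, pr_X, pr_Y]

lemma comm_eq_one_iff {M : Type*} [Group M] {a b : M} : comm a b = 1 ↔ Commute a b := by
  rw [show comm a b = (b*a)⁻¹*(a*b) by unfold comm; group, inv_mul_eq_one]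
  exact ⟨fun h => h.symm, fun h => h.symm⟩

lemma hy4 {k : ℕ} : y k ^ 4 = 1 := by
  have := pr_rel (k := k) (r := Y ^ 4) (by simp [rels])
  simpa [pr_Y] using this

lemma hx2k_y {k : ℕ} : Commute (x k ^ 2 ^ k) (y k) := by
  have := pr_rel (k := k) (r := comm (X ^ 2 ^ k) Y) (by simp [rels])
  rw [pr_comm] at this
  simpa [pr_X, pr_Y, comm_eq_one_iff] using this

lemma hy2_x {k : ℕ} : Commute (y k ^ 2) (x k) := by
  have := pr_rel (k := k) (r := comm (Y ^ 2) X) (by simp [rels])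
  rw [pr_comm] at this
  simpa [pr_X, pr_Y, comm_eq_one_iff] using this

lemma rel_sq {k : ℕ} {i : ℕ} (h1 : 1 ≤ i) (h2 : i ≤ 2 ^ (k-1)) :
    comm (yg k 0) (yg k i) ^ 2 = 1 := by
  have := pr_rel (k := k) (r := comm (yF 0) (yF i) ^ 2) (by
    refine Set.mem_union_right _ ?_
    simp only [Set.mem_iUnion]
    exact ⟨(i:ℤ), ⟨by exact_mod_cast h1, by exact_mod_cast h2⟩, by simp⟩)
  simpa [pr_comm, pr_yF] using this

lemma rel_cx {k : ℕ} {i : ℕ} (h1 : 1 ≤ i) (h2 : i ≤ 2 ^ (k-1)) :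
    Commute (comm (yg k 0) (yg k i)) (x k) := by
  have := pr_rel (k := k) (r := comm (comm (yF 0) (yF i)) X) (by
    refine Set.mem_union_right _ ?_
    simp only [Set.mem_iUnion]
    exact ⟨(i:ℤ), ⟨by exact_mod_cast h1, by exact_mod_cast h2⟩, by simp⟩)
  rw [pr_comm, pr_comm] at this
  simpa [pr_X, pr_yF, comm_eq_one_iff] using this

lemma rel_cy {k : ℕ} {i : ℕ} (h1 : 1 ≤ i) (h2 : i ≤ 2 ^ (k-1)) :
    Commute (comm (yg k 0) (yg k i)) (y k) := by
  have := pr_rel (k := k) (r := comm (comm (yF 0) (yF i)) Y) (by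
    refine Set.mem_union_right _ ?_
    simp only [Set.mem_iUnion]
    exact ⟨(i:ℤ), ⟨by exact_mod_cast h1, by exact_mod_cast h2⟩, by simp⟩)
  rw [pr_comm, pr_comm] at this
  simpa [pr_Y, pr_yF, comm_eq_one_iff] using this

/-- Central elements of order dividing 2. -/
def Ksub (k : ℕ) : Subgroup (G k) where
  carrier := {g | g ∈ center (G k) ∧ g ^ 2 = 1}
  one_mem' := ⟨Subgroup.one_mem _, one_pow 2⟩
  mul_mem' := by
    rintro a b ⟨ha, ha2⟩ ⟨hb, hb2⟩
    refine ⟨mul_mem ha hb, ?_⟩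
    have hc : Commute a b := (Subgroup.mem_center_iff.mp ha b).symm
    rw [hc.mul_pow, ha2, hb2, one_mul]
  inv_mem' := by
    rintro a ⟨ha, ha2⟩
    exact ⟨inv_mem ha, by rw [inv_pow, ha2, inv_one]⟩

lemma Ksub_center {k : ℕ} {g : G k} (h : g ∈ Ksub k) : g ∈ center (G k) := h.1
lemma Ksub_sq {k : ℕ} {g : G k} (h : g ∈ Ksub k) : g ^ 2 = 1 := h.2

lemma central_conj {k : ℕ} {c : G k} (hc : c ∈ Ksub k) (g : G k) : g * c * g⁻¹ = c := by
  rw [Subgroup.mem_center_iff.mp hc.1 g, mul_assoc, mul_inv_cancel, mul_one]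

instance Ksub_normal (k : ℕ) : (Ksub k).Normal :=
  ⟨fun n hn g => by rw [central_conj hn g]; exact hn⟩

lemma mem_center_of_xy {k : ℕ} {g : G k} (hx : Commute g (x k)) (hy : Commute g (y k)) :
    g ∈ center (G k) := by
  rw [Subgroup.mem_center_iff]
  intro h
  have : h ∈ Subgroup.centralizer {g} := by
    refine PresentedGroup.generated_by _ _ (fun j => ?_) h
    rw [Subgroup.mem_centralizer_iff]
    fin_cases j
    · intro a ha; rw [Set.mem_singleton_iff.mp ha]; exact hx
    · intro a ha; rw [Set.mem_singleton_iff.mp ha]; exact hy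
  exact (Subgroup.mem_centralizer_iff.mp this g rfl).symm

lemma mem_Ksub {k : ℕ} {g : G k} (hx : Commute g (x k)) (hy : Commute g (y k))
    (h2 : g ^ 2 = 1) : g ∈ Ksub k := ⟨mem_center_of_xy hx hy, h2⟩

lemma yg_zero {k : ℕ} : yg k 0 = y k := by simp [yg]

lemma yg_shift {k : ℕ} (i j : ℤ) : x k ^ (-j) * yg k i * x k ^ j = yg k (i + j) := by
  unfold yg; group

lemma yg_period {k : ℕ} (i j : ℤ) : yg k (i + (2 ^ k : ℕ) * j) = yg k i := by
  have hc : Commute (x k ^ (((2 ^ k : ℕ) : ℤ) * j)) (y k) := by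
    rw [zpow_mul, zpow_natCast]
    exact (hx2k_y (k := k)).zpow_left j
  have key : x k ^ (-(((2 ^ k : ℕ) : ℤ) * j)) * y k * x k ^ (((2 ^ k : ℕ) : ℤ) * j) = y k := by
    rw [zpow_neg, mul_assoc, ← hc.eq, inv_mul_cancel_left]
  conv_rhs => rw [yg, ← key]
  unfold yg
  group


lemma comm_inv {M : Type*} [Group M] (a b : M) : (comm a b)⁻¹ = comm b a := by
  unfold comm; group

lemma comm_self {M : Type*} [Group M] (a : M) : comm a a = 1 := by unfold comm; group

lemma comm_conj {M : Type*} [Group M] (g a b : M) :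
    comm (g⁻¹ * a * g) (g⁻¹ * b * g) = g⁻¹ * comm a b * g := by
  unfold comm; group

lemma comm_yg_shift {k : ℕ} (a b j : ℤ) :
    comm (yg k (a + j)) (yg k (b + j)) = (x k ^ j)⁻¹ * comm (yg k a) (yg k b) * x k ^ j := by
  rw [← yg_shift a j, ← yg_shift b j, zpow_neg, comm_conj]

lemma comm_y0_mem_base {k : ℕ} {i : ℕ} (h1 : 1 ≤ i) (h2 : i ≤ 2 ^ (k - 1)) :
    comm (yg k 0) (yg k i) ∈ Ksub k :=
  mem_Ksub (rel_cx h1 h2) (rel_cy h1 h2) (rel_sq h1 h2)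

lemma comm_y0_mem {k : ℕ} (hk : 1 ≤ k) (m : ℤ) : comm (yg k 0) (yg k m) ∈ Ksub k := by
  -- reduce to 0 ≤ m < 2^k
  have hper : yg k m = yg k (m % (2 ^ k : ℕ)) := by
    conv_lhs => rw [show m = m % (2 ^ k : ℕ) + (2 ^ k : ℕ) * (m / (2 ^ k : ℕ)) from
      (Int.emod_add_mul_ediv m (2 ^ k : ℕ)).symm]
    rw [yg_period]
  rw [hper]
  have hpos : (0 : ℤ) < (2 ^ k : ℕ) := by positivity
  have h0 : 0 ≤ m % (2 ^ k : ℕ) := Int.emod_nonneg m (ne_of_gt hpos)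
  have hlt : m % (2 ^ k : ℕ) < (2 ^ k : ℕ) := Int.emod_lt_of_pos m hpos
  obtain ⟨n, hn⟩ : ∃ n : ℕ, m % (2 ^ k : ℕ) = (n : ℤ) := ⟨(m % (2 ^ k : ℕ)).toNat, (Int.toNat_of_nonneg h0).symm⟩
  rw [hn] at hlt ⊢
  have hnlt : n < 2 ^ k := by exact_mod_cast hlt
  rcases Nat.eq_zero_or_pos n with hn0 | hn1
  · subst hn0
    simp only [Nat.cast_zero, comm_self]
    exact (Ksub k).one_mem
  rcases le_or_gt n (2 ^ (k - 1)) with hle | hgt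
  · exact comm_y0_mem_base hn1 hle
  · -- n > 2^(k-1); use n' = 2^k - n
    have hk2 : 2 ^ k = 2 * 2 ^ (k - 1) := by
      rw [← pow_succ']
      congr 1
      omega
    have h1' : 1 ≤ 2 ^ k - n := by omega
    have h2' : 2 ^ k - n ≤ 2 ^ (k - 1) := by omega
    have hc' : comm (yg k 0) (yg k ((2 ^ k - n : ℕ) : ℤ)) ∈ Ksub k := comm_y0_mem_base h1' h2'
    have hyg : yg k n = yg k (-((2 ^ k - n : ℕ) : ℤ)) := by
      have heq : -((2 ^ k - n : ℕ) : ℤ) + (2 ^ k : ℕ) * 1 = (n : ℤ) := by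
        rw [Nat.cast_sub hnlt.le]
        push_cast
        ring
      rw [← heq, yg_period]
    rw [hyg]
    have hshift : comm (yg k 0) (yg k (-((2 ^ k - n : ℕ) : ℤ)))
        = (x k ^ (-((2 ^ k - n : ℕ) : ℤ)))⁻¹ * comm (yg k ((2 ^ k - n : ℕ) : ℤ)) (yg k 0) * x k ^ (-((2 ^ k - n : ℕ) : ℤ)) := by
      have := comm_yg_shift (k := k) ((2 ^ k - n : ℕ) : ℤ) 0 (-((2 ^ k - n : ℕ) : ℤ))
      simpa using this
    rw [hshift, ← comm_inv]
    have hcinv : (comm (yg k 0) (yg k ((2 ^ k - n : ℕ) : ℤ)))⁻¹ ∈ Ksub k := (Ksub k).inv_mem hc'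
    have h2 := central_conj hcinv ((x k ^ (-((2 ^ k - n : ℕ) : ℤ)))⁻¹)
    rw [inv_inv] at h2
    rw [h2]
    exact hcinv
  
lemma comm_yg_mem {k : ℕ} (hk : 1 ≤ k) (i j : ℤ) : comm (yg k i) (yg k j) ∈ Ksub k := by
  have h := comm_yg_shift (k := k) 0 (j - i) i
  simp only [zero_add, sub_add_cancel] at h
  rw [h]
  have hc := comm_y0_mem hk (j - i)
  have h2 := central_conj hc ((x k ^ i)⁻¹)
  rw [inv_inv] at h2
  rw [h2]
  exact hc


def Sset (k : ℕ) : Set (G k) := {g | ∃ i : ℤ, g = yg k i} ∪ (Ksub k : Set (G k))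

def B (k : ℕ) : Subgroup (G k) := Subgroup.closure (Sset k)

lemma conj_mem_closure_of {M : Type*} [Group M] {S : Set M} {g : M}
    (h : ∀ s ∈ S, g * s * g⁻¹ ∈ Subgroup.closure S) :
    ∀ b ∈ Subgroup.closure S, g * b * g⁻¹ ∈ Subgroup.closure S := by
  intro b hb
  induction hb using Subgroup.closure_induction with
  | mem s hs => exact h s hs
  | one => simpa using Subgroup.one_mem _
  | mul a b _ _ iha ihb =>
      have := Subgroup.mul_mem _ iha ihb
      have heq : g * a * g⁻¹ * (g * b * g⁻¹) = g * (a * b) * g⁻¹ := by group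
      rwa [heq] at this
  | inv a _ iha =>
      have := Subgroup.inv_mem _ iha
      have heq : (g * a * g⁻¹)⁻¹ = g * a⁻¹ * g⁻¹ := by group
      rwa [heq] at this

/-- conjugation by `x` and `x⁻¹` sends generators of `B` to `B`. -/
lemma x_conj_S {k : ℕ} : ∀ s ∈ Sset k, x k * s * (x k)⁻¹ ∈ B k ∧ (x k)⁻¹ * s * x k ∈ B k := by
  rintro s (⟨i, rfl⟩ | hs)
  · constructor
    · have h := yg_shift (k := k) i (-1)
      simp only [neg_neg, zpow_one, zpow_neg] at h
      rw [h]
      exact Subgroup.subset_closure (Or.inl ⟨i + (-1), rfl⟩)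
    · have h := yg_shift (k := k) i 1
      simp only [zpow_one] at h
      have h1 : (x k) ^ (-1 : ℤ) = (x k)⁻¹ := by simp
      rw [h1] at h
      rw [h]
      exact Subgroup.subset_closure (Or.inl ⟨i + 1, rfl⟩)
  · constructor
    · rw [central_conj hs]
      exact Subgroup.subset_closure (Or.inr hs)
    · have h2 := central_conj hs (x k)⁻¹
      rw [inv_inv] at h2
      rw [h2]
      exact Subgroup.subset_closure (Or.inr hs)

lemma y_conj_S {k : ℕ} (hk : 1 ≤ k) :
    ∀ s ∈ Sset k, y k * s * (y k)⁻¹ ∈ B k ∧ (y k)⁻¹ * s * y k ∈ B k := by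
  rintro s (⟨i, rfl⟩ | hs)
  · have hci : comm (yg k i) (y k) ∈ Ksub k := by
      have := comm_yg_mem hk i 0
      rwa [yg_zero] at this
    constructor
    · -- y * a * y⁻¹ = a * (y * (comm a y)⁻¹ * y⁻¹) = a * (comm a y)⁻¹
      have hinv : (comm (yg k i) (y k))⁻¹ ∈ Ksub k := (Ksub k).inv_mem hci
      have heq : y k * yg k i * (y k)⁻¹
          = yg k i * (y k * (comm (yg k i) (y k))⁻¹ * (y k)⁻¹) := by
        unfold comm; group
      rw [heq, central_conj hinv]
      exact Subgroup.mul_mem _ (Subgroup.subset_closure (Or.inl ⟨i, rfl⟩))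
        (Subgroup.subset_closure (Or.inr hinv))
    · have heq : (y k)⁻¹ * yg k i * y k = yg k i * comm (yg k i) (y k) := by
        unfold comm; group
      rw [heq]
      exact Subgroup.mul_mem _ (Subgroup.subset_closure (Or.inl ⟨i, rfl⟩))
        (Subgroup.subset_closure (Or.inr hci))
  · constructor
    · rw [central_conj hs]
      exact Subgroup.subset_closure (Or.inr hs)
    · have h2 := central_conj hs (y k)⁻¹
      rw [inv_inv] at h2
      rw [h2]
      exact Subgroup.subset_closure (Or.inr hs)

lemma B_normal {k : ℕ} (hk : 1 ≤ k) : (B k).Normal := by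
  let T : Subgroup (G k) :=
    { carrier := {g | ∀ b ∈ B k, g * b * g⁻¹ ∈ B k ∧ g⁻¹ * b * g ∈ B k}
      one_mem' := by intro b hb; constructor <;> simpa using hb
      mul_mem' := by
        rintro g h hg hh b hb
        constructor
        · have h1 := (hh b hb).1
          have h2 := (hg _ h1).1
          have heq : g * (h * b * h⁻¹) * g⁻¹ = g * h * b * (g * h)⁻¹ := by group
          rwa [heq] at h2
        · have h1 := (hg b hb).2
          have h2 := (hh _ h1).2
          have heq : h⁻¹ * (g⁻¹ * b * g) * h = (g * h)⁻¹ * b * (g * h) := by group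
          rwa [heq] at h2
      inv_mem' := by
        rintro g hg b hb
        rw [inv_inv]
        exact ⟨(hg b hb).2, (hg b hb).1⟩ }
  have hT : ∀ g : G k, g ∈ T := by
    intro g
    refine PresentedGroup.generated_by _ _ (fun j => ?_) g
    fin_cases j
    · intro b hb
      exact ⟨conj_mem_closure_of (fun s hs => (x_conj_S s hs).1) b hb,
        by
          have := conj_mem_closure_of (g := (x k)⁻¹)
            (fun s hs => by simpa [inv_inv, B] using (x_conj_S s hs).2) b hb
          simpa [inv_inv, B, x] using this⟩
    · intro b hb
      exact ⟨conj_mem_closure_of (fun s hs => (y_conj_S hk s hs).1) b hb,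
        by
          have := conj_mem_closure_of (g := (y k)⁻¹)
            (fun s hs => by simpa [inv_inv, B] using (y_conj_S hk s hs).2) b hb
          simpa [inv_inv, B, y] using this⟩
  exact ⟨fun n hn g => (hT g n hn).1⟩


lemma closure_commute {M : Type*} [Group M] {S : Set M}
    (h : ∀ a ∈ S, ∀ b ∈ S, Commute a b) :
    ∀ a ∈ Subgroup.closure S, ∀ b ∈ Subgroup.closure S, Commute a b := by
  intro a ha
  induction ha using Subgroup.closure_induction with
  | mem s hs =>
      intro b hb
      induction hb using Subgroup.closure_induction with
      | mem t ht => exact h s hs t ht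
      | one => exact Commute.one_right _
      | mul u v _ _ ihu ihv => exact Commute.mul_right ihu ihv
      | inv u _ ihu => exact Commute.inv_right ihu
  | one => intro b _; exact Commute.one_left _
  | mul u v _ _ ihu ihv => intro b hb; exact Commute.mul_left (ihu b hb) (ihv b hb)
  | inv u _ ihu => intro b hb; exact Commute.inv_left (ihu b hb)

open scoped commutatorElement in
lemma commutator_mem_Ksub {k : ℕ} (hk : 1 ≤ k) :
    ∀ a ∈ B k, ∀ b ∈ B k, ⁅a, b⁆ ∈ Ksub k := by
  intro a ha b hb
  set φ := QuotientGroup.mk' (Ksub k) with hφ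
  have himg : ∀ u ∈ φ '' Sset k, ∀ v ∈ φ '' Sset k, Commute u v := by
    rintro u ⟨s, hs, rfl⟩ v ⟨t, ht, rfl⟩
    rcases hs with ⟨i, rfl⟩ | hs
    · rcases ht with ⟨j, rfl⟩ | ht
      · have hc : comm (yg k i) (yg k j) ∈ Ksub k := comm_yg_mem hk i j
        have h1 : φ (comm (yg k i) (yg k j)) = 1 := (QuotientGroup.eq_one_iff _).mpr hc
        have h2 : comm (φ (yg k i)) (φ (yg k j)) = 1 := by
          rw [← h1]; simp [comm]
        exact comm_eq_one_iff.mp h2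
      · have : φ t = 1 := (QuotientGroup.eq_one_iff _).mpr ht
        rw [this]; exact Commute.one_right _
    · have : φ s = 1 := (QuotientGroup.eq_one_iff _).mpr hs
      rw [this]; exact Commute.one_left _
  have hmap : ∀ g ∈ B k, φ g ∈ Subgroup.closure (φ '' Sset k) := by
    intro g hg
    rw [← MonoidHom.map_closure]
    exact Subgroup.mem_map_of_mem φ hg
  have hcomm : Commute (φ a) (φ b) :=
    closure_commute himg _ (hmap a ha) _ (hmap b hb)
  rw [← QuotientGroup.eq_one_iff (N := Ksub k) ⁅a, b⁆]
  show φ ⁅a, b⁆ = 1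
  rw [map_commutatorElement]
  exact commutatorElement_eq_one_iff_commute.mpr hcomm

/-- For every `k ≥ 1`, the commutator subgroup `[H_k, H_k]` is contained in the
centre of `G_k` and has exponent dividing `2`. -/
theorem stmt2 (k : ℕ) (hk : 1 ≤ k) :
    ⁅Hsub k, Hsub k⁆ ≤ Subgroup.center (G k) ∧
    ∀ g ∈ ⁅Hsub k, Hsub k⁆, g ^ 2 = 1 := by
  haveI hBn : (B k).Normal := B_normal hk
  have hyB : y k ∈ B k := by
    rw [← yg_zero]
    exact Subgroup.subset_closure (Or.inl ⟨0, rfl⟩)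
  have hHB : Hsub k ≤ B k :=
    Subgroup.normalClosure_le_normal (by simpa using hyB)
  have hmain : ⁅Hsub k, Hsub k⁆ ≤ Ksub k :=
    Subgroup.commutator_le.mpr fun a ha b hb =>
      commutator_mem_Ksub hk a (hHB ha) b (hHB hb)
  exact ⟨fun g hg => (hmain hg).1, fun g hg => (hmain hg).2⟩


end P2G
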